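/- Let M = (M_k) be a quasianalytic regular weight sequence and n ≥ 1. Let f ∈ C^∞(ℝⁿ) be such that for every affine line in ℝⁿ, i.e. for every a, v ∈ ℝⁿ with v ≠ 0, the function t ↦ f(a + t v) belongs to E^{M}(ℝ). If all partial derivatives of f vanish at some point a ∈ ℝⁿ (∂^α f(a) = 0 for all α ∈ ℕⁿ), then f ≡ 0 on ℝⁿ. -/

import Mathlib

open Filter Metric Set Asymptotics
open scoped BigOperators Topology NNReal

noncomputable section

/-- ℝⁿ with the Euclidean norm. -/
abbrev Euc (n : ℕ) := EuclideanSpace ℝ (Fin n)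

/-- First-order partial derivative in the `i`-th coordinate direction. -/
def pder {n : ℕ} (i : Fin n) (f : Euc n → ℝ) : Euc n → ℝ :=
  fun x => fderiv ℝ f x (EuclideanSpace.single i 1)

/-- The multi-index partial derivative `∂^α f`. -/
def pderM {n : ℕ} (α : Fin n → ℕ) (f : Euc n → ℝ) : Euc n → ℝ :=
  (List.finRange n).foldr (fun i g => (pder i)^[α i] g) f

/-- `|α| = ∑ i, α i`. -/
def mdeg {n : ℕ} (α : Fin n → ℕ) : ℕ := ∑ i, α i

/-- `‖f‖^M_{K,ρ} ≤ C`, spelled out: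
`|∂^α f(x)| ≤ C ρ^{|α|} |α|! M_{|α|}` for all `x ∈ K` and multi-indices `α`. -/
def DCBound {n : ℕ} (M : ℕ → ℝ) (f : Euc n → ℝ) (K : Set (Euc n)) (ρ C : ℝ) : Prop :=
  ∀ x ∈ K, ∀ α : Fin n → ℕ,
    |pderM α f x| ≤ C * ρ ^ mdeg α * (mdeg α).factorial * M (mdeg α)

/-- `‖f‖^M_{K,ρ} < ∞`. -/
def DCFinite {n : ℕ} (M : ℕ → ℝ) (f : Euc n → ℝ) (K : Set (Euc n)) (ρ : ℝ) : Prop :=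
  ∃ C : ℝ, DCBound M f K ρ C

/-- The Denjoy–Carleman class of Roumieu type `E^{M}(U)`. -/
def Roumieu {n : ℕ} (M : ℕ → ℝ) (U : Set (Euc n)) (f : Euc n → ℝ) : Prop :=
  ContDiffOn ℝ (⊤ : ℕ∞) f U ∧
  ∀ K : Set (Euc n), K ⊆ U → IsCompact K → ∃ ρ > 0, DCFinite M f K ρ

/-- The Denjoy–Carleman class of Beurling type `E^{(M)}(U)`. -/
def Beurling {n : ℕ} (M : ℕ → ℝ) (U : Set (Euc n)) (f : Euc n → ℝ) : Prop :=
  ContDiffOn ℝ (⊤ : ℕ∞) f U ∧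
  ∀ K : Set (Euc n), K ⊆ U → IsCompact K → ∀ ρ > 0, DCFinite M f K ρ

/-- A regular weight sequence. -/
def RegularWeightSeq (M : ℕ → ℝ) : Prop :=
  (∀ k, 0 < M k) ∧
  (∀ k : ℕ, 1 ≤ k → (M k) ^ 2 ≤ M (k - 1) * M (k + 1)) ∧
  M 0 = 1 ∧ 1 ≤ M 1 ∧
  Tendsto (fun k : ℕ => (M k) ^ ((k : ℝ)⁻¹)) atTop atTop

/-- Quasianalyticity of a weight sequence: `∑ M_k/((k+1) M_{k+1}) = ∞`. -/
def QAseq (M : ℕ → ℝ) : Prop :=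
  ¬ Summable (fun k : ℕ => M k / ((k + 1) * M (k + 1)))

/-- `p : V → ℝⁿ` is an `E^{M}`-plot (Roumieu type): `V` is open and all
component functions of `p` belong to `E^{M}(V)`. -/
def RoumieuPlot {m n : ℕ} (M : ℕ → ℝ) (V : Set (Euc m)) (p : Euc m → Euc n) : Prop :=
  IsOpen V ∧ ∀ j : Fin n, Roumieu M V (fun x => p x j)

/-- `p : V → ℝⁿ` is an `E^{(M)}`-plot (Beurling type). -/
def BeurlingPlot {m n : ℕ} (M : ℕ → ℝ) (V : Set (Euc m)) (p : Euc m → Euc n) : Prop :=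
  IsOpen V ∧ ∀ j : Fin n, Beurling M V (fun x => p x j)

/-- `φ(t) = ω(e^t)`. -/
def youngPhi (ω : ℝ → ℝ) (t : ℝ) : ℝ := ω (Real.exp t)

/-- The Young conjugate `φ*(t) = sup_{s ≥ 0} (st - φ(s))`. -/
def youngStar (ω : ℝ → ℝ) (t : ℝ) : ℝ := ⨆ s : Ici (0 : ℝ), ((s : ℝ) * t - youngPhi ω s)

/-- A weight function in the sense of Braun–Meise–Taylor. -/
def WeightFunction (ω : ℝ → ℝ) : Prop :=
  ContinuousOn ω (Ici 0) ∧ MonotoneOn ω (Ici 0) ∧ ω 0 = 0 ∧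
  Tendsto ω atTop atTop ∧
  ((fun t => ω (2 * t)) =O[atTop] ω) ∧
  (ω =O[atTop] fun t => t) ∧
  (Real.log =o[atTop] ω) ∧
  ConvexOn ℝ univ (youngPhi ω)

/-- Quasianalyticity of a weight function: `∫_0^∞ ω(t)/(1+t²) dt = ∞`. -/
def QAweight (ω : ℝ → ℝ) : Prop :=
  ¬ MeasureTheory.IntegrableOn (fun t => ω t / (1 + t ^ 2)) (Ioi 0)

/-- `‖f‖^ω_{K,ρ} ≤ C`. -/
def OmBound {n : ℕ} (ω : ℝ → ℝ) (f : Euc n → ℝ) (K : Set (Euc n)) (ρ C : ℝ) : Prop :=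
  ∀ x ∈ K, ∀ α : Fin n → ℕ,
    |pderM α f x| ≤ C * Real.exp ((1 / ρ) * youngStar ω (ρ * (mdeg α : ℝ)))

/-- `‖f‖^ω_{K,ρ} < ∞`. -/
def OmFinite {n : ℕ} (ω : ℝ → ℝ) (f : Euc n → ℝ) (K : Set (Euc n)) (ρ : ℝ) : Prop :=
  ∃ C : ℝ, OmBound ω f K ρ C

/-- The Braun–Meise–Taylor class of Roumieu type `E^{ω}(U)`. -/
def RoumieuW {n : ℕ} (ω : ℝ → ℝ) (U : Set (Euc n)) (f : Euc n → ℝ) : Prop :=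
  ContDiffOn ℝ (⊤ : ℕ∞) f U ∧
  ∀ K : Set (Euc n), K ⊆ U → IsCompact K → ∃ ρ > 0, OmFinite ω f K ρ

/-- The Braun–Meise–Taylor class of Beurling type `E^{(ω)}(U)`. -/
def BeurlingW {n : ℕ} (ω : ℝ → ℝ) (U : Set (Euc n)) (f : Euc n → ℝ) : Prop :=
  ContDiffOn ℝ (⊤ : ℕ∞) f U ∧
  ∀ K : Set (Euc n), K ⊆ U → IsCompact K → ∀ ρ > 0, OmFinite ω f K ρ

/-- An `E^{ω}`-plot (Roumieu type). -/
def RoumieuWPlot {m n : ℕ} (ω : ℝ → ℝ) (V : Set (Euc m)) (p : Euc m → Euc n) : Prop :=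
  IsOpen V ∧ ∀ j : Fin n, RoumieuW ω V (fun x => p x j)

/-- An `E^{(ω)}`-plot (Beurling type). -/
def BeurlingWPlot {m n : ℕ} (ω : ℝ → ℝ) (V : Set (Euc m)) (p : Euc m → Euc n) : Prop :=
  IsOpen V ∧ ∀ j : Fin n, BeurlingW ω V (fun x => p x j)

/-- `|K| = sup_{x ∈ K} |x|`. -/
def supNorm {n : ℕ} (K : Set (Euc n)) : ℝ := ⨆ x : K, ‖(x : Euc n)‖

/-- The class `E^{M}(ℝ)` for functions of one real variable. -/
def Roumieu1 (M : ℕ → ℝ) (g : ℝ → ℝ) : Prop :=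
  ContDiff ℝ (⊤ : ℕ∞) g ∧
  ∀ K : Set ℝ, IsCompact K → ∃ ρ > 0, ∃ C : ℝ, ∀ t ∈ K, ∀ k : ℕ,
    |iteratedDeriv k g t| ≤ C * ρ ^ k * k.factorial * M k

/-- The class `A_m^{M}(U)`: smooth functions on `U` which are of class `E^{M}`
along every `m`-dimensional `E^{M}`-plot in `U`. -/
def AClass {n : ℕ} (M : ℕ → ℝ) (m : ℕ) (U : Set (Euc n)) (f : Euc n → ℝ) : Prop :=
  ContDiffOn ℝ (⊤ : ℕ∞) f U ∧
  ∀ (V : Set (Euc m)) (p : Euc m → Euc n), IsOpen V → MapsTo p V U →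
    (∀ j : Fin n, Roumieu M V (fun x => p x j)) → Roumieu M V (f ∘ p)

end


lemma one_le_inf' : (1 : WithTop ℕ∞) ≤ ((⊤:ℕ∞) : WithTop ℕ∞) := by exact_mod_cast le_top

lemma itd_contDiff {g : ℝ → ℝ} (hg : ContDiff ℝ (⊤:ℕ∞) g) (k : ℕ) :
    ContDiff ℝ (⊤:ℕ∞) (iteratedDeriv k g) := by
  rw [iteratedDeriv_eq_iterate]
  exact hg.iterate_deriv k

lemma bang (N : ℕ → ℝ) (hNpos : ∀ k, 0 < N k)
    (hconv : ∀ k, N (k+1) * N (k+1) ≤ N k * N (k+2))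
    (hdiv : ¬ Summable (fun k => N k / N (k+1)))
    (g : ℝ → ℝ) (hg : ContDiff ℝ (⊤ : ℕ∞) g) (T : ℝ)
    (hb : ∀ k : ℕ, ∀ t ∈ Set.Icc (0:ℝ) T, |iteratedDeriv k g t| ≤ N k)
    (hflat : ∀ k : ℕ, iteratedDeriv k g 0 = 0) :
    ∀ t ∈ Set.Icc (0:ℝ) T, g t = 0 := by
  set m : ℕ → ℝ := fun k => N k / N (k+1) with hm
  have hmpos : ∀ k, 0 < m k := fun k => div_pos (hNpos k) (hNpos (k+1))
  have hmanti : ∀ j k : ℕ, j ≤ k → m k ≤ m j := by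
    have hstep : ∀ k, m (k+1) ≤ m k := by
      intro k
      show N (k+1) / N (k+2) ≤ N k / N (k+1)
      rw [div_le_div_iff₀ (hNpos (k+2)) (hNpos (k+1))]
      exact hconv k
    exact fun j k h => antitone_nat_of_succ_le hstep h
  have hmN : ∀ k, m k * N (k+1) = N k := fun k => div_mul_cancel₀ _ (hNpos (k+1)).ne'
  have claim : ∀ d q : ℕ, ∀ j ≤ q, ∀ t : ℝ, 0 ≤ t → t ≤ T →
      t ≤ (1/8) * ∑ c ∈ Finset.Ico (q+1) (q+d+1), m c →
      |iteratedDeriv j g t| ≤ (1/4:ℝ)^(q-j) * N j := by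
    intro d
    induction d with
    | zero =>
      intro q j hj t ht0 htT htB
      rw [show q+0+1 = q+1 from rfl, Finset.Ico_self, Finset.sum_empty, mul_zero] at htB
      have ht : t = 0 := le_antisymm htB ht0
      subst ht
      rw [hflat j, abs_zero]
      have := hNpos j
      positivity
    | succ d ih =>
      intro q j hj t ht0 htT htB
      set B : ℝ := (1/8) * ∑ c ∈ Finset.Ico (q+2) (q+1+d+1), m c with hBdef
      have hB0 : 0 ≤ B := by
        have : (0:ℝ) ≤ ∑ c ∈ Finset.Ico (q+2) (q+1+d+1), m c :=
          Finset.sum_nonneg fun c _ => (hmpos c).le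
        rw [hBdef]; linarith
      by_cases hcase : t ≤ B
      · have h1 := ih (q+1) j (hj.trans (Nat.le_succ q)) t ht0 htT (by
          rw [show q+1+1 = q+2 from rfl]; exact hcase)
        have he : q+1-j = (q-j)+1 := by omega
        rw [he, pow_succ] at h1
        have hp := pow_pos (show (0:ℝ) < 1/4 by norm_num) (q-j)
        nlinarith [hNpos j]
      · push_neg at hcase
        have hBT : B ≤ T := le_of_lt (lt_of_lt_of_le hcase htT)
        have hsplit : ∑ c ∈ Finset.Ico (q+1) (q+(d+1)+1), m c
            = m (q+1) + ∑ c ∈ Finset.Ico (q+2) (q+1+d+1), m c := by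
          rw [show q+(d+1)+1 = q+1+d+1 from by omega,
            Finset.sum_eq_sum_Ico_succ_bot (by omega : q+1 < q+1+d+1)]
        have hstept : t - B ≤ (1/8) * m (q+1) := by
          rw [hsplit] at htB
          rw [hBdef]
          linarith
        -- inner induction
        have inner : ∀ r : ℕ, r ≤ q+1 → ∀ s : ℝ, B ≤ s → s ≤ t →
            |iteratedDeriv (q+1-r) g s| ≤ 3 * (1/4:ℝ)^r * N (q+1-r) := by
          intro r
          induction r with
          | zero =>
            intro _ s hBs hst
            have h := hb (q+1) s ⟨hB0.trans hBs, hst.trans htT⟩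
            rw [Nat.sub_zero, pow_zero]
            nlinarith [hNpos (q+1)]
          | succ r ihr =>
            intro hr s hBs hst
            have hrq : r ≤ q+1 := by omega
            set j' : ℕ := q-r with hj'
            have hj1 : q+1-(r+1) = j' := by omega
            have hj2 : q+1-r = j'+1 := by omega
            rw [hj1]
            have hF : ∀ u ∈ Set.Icc B s, HasDerivWithinAt (iteratedDeriv j' g)
                (iteratedDeriv (j'+1) g u) (Set.Icc B s) u := by
              intro u _
              have hdiff : DifferentiableAt ℝ (iteratedDeriv j' g) u :=
                ((itd_contDiff hg j').differentiable (by simp) u)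
              have h1 := hdiff.hasDerivAt
              rw [← iteratedDeriv_succ] at h1
              exact h1.hasDerivWithinAt
            have hbound : ∀ u ∈ Set.Ico B s, ‖iteratedDeriv (j'+1) g u‖ ≤ 3*(1/4:ℝ)^r * N (j'+1) := by
              intro u hu
              have h := ihr hrq u hu.1 (le_of_lt (lt_of_lt_of_le hu.2 hst))
              rw [hj2] at h
              simpa [Real.norm_eq_abs] using h
            have hmvt := norm_image_sub_le_of_norm_deriv_le_segment' hF hbound s
              (Set.right_mem_Icc.mpr hBs)
            have hFB : |iteratedDeriv j' g B| ≤ (1/4:ℝ)^(r+1) * N j' := by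
              have h := ih (q+1) j' (by omega) B hB0 hBT (by
                rw [show q+1+1 = q+2 from rfl])
              rwa [show q+1-j' = r+1 by omega] at h
            have habs : |iteratedDeriv j' g s| ≤ |iteratedDeriv j' g B|
                + 3*(1/4:ℝ)^r * N (j'+1) * (s - B) := by
              have h2 : |iteratedDeriv j' g s - iteratedDeriv j' g B|
                  ≤ 3*(1/4:ℝ)^r * N (j'+1) * (s - B) := by
                simpa [Real.norm_eq_abs] using hmvt
              calc |iteratedDeriv j' g s|
                  = |iteratedDeriv j' g B + (iteratedDeriv j' g s - iteratedDeriv j' g B)| := by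
                    congr 1
                    ring
                _ ≤ |iteratedDeriv j' g B| + |iteratedDeriv j' g s - iteratedDeriv j' g B| :=
                    abs_add_le _ _
                _ ≤ _ := by linarith
            have hsB : s - B ≤ (1/8) * m (q+1) := by linarith
            have hmle : m (q+1) ≤ m j' := hmanti j' (q+1) (by omega)
            have hNj : m j' * N (j'+1) = N j' := hmN j'
            have hp := pow_pos (show (0:ℝ) < 1/4 by norm_num) r
            have hN1 := hNpos (j'+1)
            have hN0 := hNpos j'
            have hterm : 3*(1/4:ℝ)^r * N (j'+1) * (s - B) ≤ (3/8)*(1/4:ℝ)^r * N j' := by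
              have h3 : 3*(1/4:ℝ)^r * N (j'+1) * (s - B)
                  ≤ 3*(1/4:ℝ)^r * N (j'+1) * ((1/8) * m (q+1)) := by
                apply mul_le_mul_of_nonneg_left hsB
                positivity
              have h4 : N (j'+1) * m (q+1) ≤ N (j'+1) * m j' :=
                mul_le_mul_of_nonneg_left hmle hN1.le
              nlinarith
            rw [pow_succ]
            rw [pow_succ] at hFB
            nlinarith
        -- conclude outer step
        have hr : q+1-j ≤ q+1 := by omega
        have h := inner (q+1-j) hr t (le_of_lt hcase) le_rfl
        rw [show q+1-(q+1-j) = j by omega, show q+1-j = (q-j)+1 by omega, pow_succ] at h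
        have hp := pow_pos (show (0:ℝ) < 1/4 by norm_num) (q-j)
        nlinarith [hNpos j]
  intro t ht
  have key : ∀ q : ℕ, |g t| ≤ (1/4:ℝ)^q * N 0 := by
    intro q
    have hsum := (not_summable_iff_tendsto_nat_atTop_of_nonneg fun k => (hmpos k).le).mp hdiv
    obtain ⟨p, hp⟩ := (hsum.eventually_ge_atTop
      (8 * t + ∑ c ∈ Finset.range (q+1), m c)).exists
    set p' := max p (q+1) with hp'def
    have hple : ∑ c ∈ Finset.range p, m c ≤ ∑ c ∈ Finset.range p', m c := by
      apply Finset.sum_le_sum_of_subset_of_nonneg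
      · exact Finset.range_subset_range.mpr (le_max_left _ _)
      · exact fun i _ _ => (hmpos i).le
    have hq1p : q+1 ≤ p' := le_max_right _ _
    have hIco : ∑ c ∈ Finset.Ico (q+1) p', m c
        = ∑ c ∈ Finset.range p', m c - ∑ c ∈ Finset.range (q+1), m c := by
      rw [Finset.sum_Ico_eq_sub _ hq1p]
    have htle : t ≤ (1/8) * ∑ c ∈ Finset.Ico (q+1) p', m c := by
      rw [hIco]; linarith
    have hc := claim (p' - (q+1)) q 0 (Nat.zero_le q) t ht.1 ht.2 (by
      rw [show q + (p'-(q+1)) + 1 = p' by omega]; exact htle)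
    simpa using hc
  by_contra hne
  have habs : 0 < |g t| := abs_pos.mpr hne
  obtain ⟨q, hq⟩ := exists_pow_lt_of_lt_one (div_pos habs (hNpos 0))
    (by norm_num : (1/4:ℝ) < 1)
  have h := key q
  rw [lt_div_iff₀ (hNpos 0)] at hq
  linarith

noncomputable section AuxB

lemma one_le_inf : (1 : WithTop ℕ∞) ≤ ((⊤:ℕ∞) : WithTop ℕ∞) := by exact_mod_cast le_top

variable {n : ℕ}

def dirD {n : ℕ} (v : Euc n) (h : Euc n → ℝ) : Euc n → ℝ := fun x => fderiv ℝ h x v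

lemma contDiff_dirD {f : Euc n → ℝ} (hf : ContDiff ℝ (⊤:ℕ∞) f) (v : Euc n) :
    ContDiff ℝ (⊤:ℕ∞) (dirD v f) :=
  (ContinuousLinearMap.apply ℝ ℝ v).contDiff.comp (contDiff_infty_iff_fderiv.mp hf).2

lemma contDiff_pder {f : Euc n → ℝ} (hf : ContDiff ℝ (⊤:ℕ∞) f) (i : Fin n) :
    ContDiff ℝ (⊤:ℕ∞) (pder i f) := contDiff_dirD hf _

lemma pder_comm {f : Euc n → ℝ} (hf : ContDiff ℝ (⊤:ℕ∞) f) (i j : Fin n) :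
    pder i (pder j f) = pder j (pder i f) := by
  funext x
  have hdf : ContDiff ℝ (⊤:ℕ∞) (fderiv ℝ f) := (contDiff_infty_iff_fderiv.mp hf).2
  have hder : ∀ y, HasFDerivAt f (fderiv ℝ f y) y := fun y =>
    (hf.differentiable (by simp) y).hasFDerivAt
  have hx : HasFDerivAt (fderiv ℝ f) (fderiv ℝ (fderiv ℝ f) x) x :=
    (hdf.differentiable (by simp) x).hasFDerivAt
  have hsymm := second_derivative_symmetric hder hx
  have key : ∀ u w : Euc n, fderiv ℝ (fun y => fderiv ℝ f y u) x w
      = fderiv ℝ (fderiv ℝ f) x w u := by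
    intro u w
    have h0 : (fun y => fderiv ℝ f y u)
        = (ContinuousLinearMap.apply ℝ ℝ u) ∘ fderiv ℝ f := rfl
    rw [h0, fderiv_comp x ((ContinuousLinearMap.apply ℝ ℝ u).differentiableAt)
      (hdf.differentiable (by simp) x)]
    simp
  exact (key (EuclideanSpace.single j 1) (EuclideanSpace.single i 1)).trans
    ((hsymm _ _).trans (key (EuclideanSpace.single i 1) (EuclideanSpace.single j 1)).symm)

def pchain {n : ℕ} (l : List (Fin n)) (f : Euc n → ℝ) : Euc n → ℝ := l.foldr pder f

@[simp] lemma pchain_nil (f : Euc n → ℝ) : pchain [] f = f := rfl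

lemma pchain_cons (i : Fin n) (l : List (Fin n)) (f : Euc n → ℝ) :
    pchain (i :: l) f = pder i (pchain l f) := rfl

lemma pchain_append (l₁ l₂ : List (Fin n)) (f : Euc n → ℝ) :
    pchain (l₁ ++ l₂) f = pchain l₁ (pchain l₂ f) := by
  simp [pchain, List.foldr_append]

lemma contDiff_pchain {f : Euc n → ℝ} (hf : ContDiff ℝ (⊤:ℕ∞) f) (l : List (Fin n)) :
    ContDiff ℝ (⊤:ℕ∞) (pchain l f) := by
  induction l with
  | nil => simpa
  | cons i l ih => exact contDiff_pder ih i

lemma pchain_perm {f : Euc n → ℝ} (hf : ContDiff ℝ (⊤:ℕ∞) f) {l l' : List (Fin n)}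
    (h : l.Perm l') : pchain l f = pchain l' f := by
  induction h with
  | nil => rfl
  | cons x h ih => rw [pchain_cons, pchain_cons, ih]
  | swap x y l =>
      rw [pchain_cons, pchain_cons, pchain_cons, pchain_cons]
      exact pder_comm (contDiff_pchain hf l) y x
  | trans h₁ h₂ ih₁ ih₂ => rw [ih₁, ih₂]

lemma pchain_replicate (m : ℕ) (i : Fin n) (f : Euc n → ℝ) :
    pchain (List.replicate m i) f = (pder i)^[m] f := by
  induction m with
  | zero => rfl
  | succ m ih => rw [List.replicate_succ, pchain_cons, ih, Function.iterate_succ_apply']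

def canonList {n : ℕ} (α : Fin n → ℕ) : List (Fin n) :=
  (List.finRange n).flatMap fun i => List.replicate (α i) i

lemma pderM_eq_pchain (α : Fin n → ℕ) (f : Euc n → ℝ) :
    pderM α f = pchain (canonList α) f := by
  show (List.finRange n).foldr _ f = _
  unfold canonList
  induction List.finRange n with
  | nil => rfl
  | cons i L ih =>
    rw [List.foldr_cons, ih, List.flatMap_cons, pchain_append, pchain_replicate]

lemma count_flatMap_zero (α : Fin n → ℕ) (j : Fin n) :
    ∀ L : List (Fin n), j ∉ L →
      (L.flatMap fun i => List.replicate (α i) i).count j = 0 := by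
  intro L
  induction L with
  | nil => simp
  | cons i L ih =>
    intro hj
    simp only [List.mem_cons, not_or] at hj
    rw [List.flatMap_cons, List.count_append, ih hj.2, List.count_replicate]
    simp [hj.1, Ne.symm hj.1]

lemma count_flatMap_mem (α : Fin n → ℕ) (j : Fin n) :
    ∀ L : List (Fin n), L.Nodup → j ∈ L →
      (L.flatMap fun i => List.replicate (α i) i).count j = α j := by
  intro L
  induction L with
  | nil => intro _ h; simp at h
  | cons i L ih =>
    intro hnd hmem
    rw [List.flatMap_cons, List.count_append]
    rcases eq_or_ne i j with rfl | hij
    · rw [List.count_replicate_self, count_flatMap_zero α i L (List.nodup_cons.mp hnd).1,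
        Nat.add_zero]
    · have hz : List.count j (List.replicate (α i) i) = 0 := by
        rw [List.count_replicate]; simp [hij]
      have hmem' : j ∈ L := by
        rcases List.mem_cons.mp hmem with h | h
        · exact absurd h.symm hij
        · exact h
      rw [hz, ih (List.nodup_cons.mp hnd).2 hmem', Nat.zero_add]

lemma count_canonList (α : Fin n → ℕ) (j : Fin n) : (canonList α).count j = α j :=
  count_flatMap_mem α j _ (List.nodup_finRange n) (List.mem_finRange j)

lemma pchain_flat {f : Euc n → ℝ} {a : Euc n} (hf : ContDiff ℝ (⊤:ℕ∞) f)
    (hflat : ∀ α : Fin n → ℕ, pderM α f a = 0) (l : List (Fin n)) :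
    pchain l f a = 0 := by
  have hperm : l.Perm (canonList fun i => l.count i) := by
    rw [List.perm_iff_count]
    intro j
    rw [count_canonList]
  rw [pchain_perm hf hperm, ← pderM_eq_pchain]
  exact hflat _

lemma pder_sum {ι : Type*} (s : Finset ι) (c : ι → ℝ) (h : ι → Euc n → ℝ)
    (hh : ∀ i, ContDiff ℝ (⊤:ℕ∞) (h i)) (j : Fin n) :
    pder j (fun x => ∑ i ∈ s, c i * h i x) = fun x => ∑ i ∈ s, c i * pder j (h i) x := by
  funext x
  show fderiv ℝ _ x _ = _
  have hfd : fderiv ℝ (fun x => ∑ i ∈ s, c i * h i x) x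
      = ∑ i ∈ s, c i • fderiv ℝ (h i) x := by
    rw [fderiv_fun_sum (fun i _ => ((hh i).differentiable (by simp) x).const_mul (c i))]
    exact Finset.sum_congr rfl fun i _ =>
      fderiv_const_mul ((hh i).differentiable (by simp) x) (c i)
  rw [hfd]
  simp [pder]

lemma pchain_sum {ι : Type*} (s : Finset ι) (c : ι → ℝ) (h : ι → Euc n → ℝ)
    (hh : ∀ i, ContDiff ℝ (⊤:ℕ∞) (h i)) (l : List (Fin n)) :
    pchain l (fun x => ∑ i ∈ s, c i * h i x) = fun x => ∑ i ∈ s, c i * pchain l (h i) x := by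
  induction l with
  | nil => rfl
  | cons j l ih =>
    rw [pchain_cons, ih, pder_sum s c _ (fun i => contDiff_pchain (hh i) l) j]
    rfl

lemma euc_decomp (v : Euc n) : ∑ i, v i • EuclideanSpace.single i (1:ℝ) = v := by
  have h := (EuclideanSpace.basisFun (Fin n) ℝ).sum_repr v
  simpa [EuclideanSpace.basisFun_apply, EuclideanSpace.basisFun_repr] using h

lemma dirD_expand {f : Euc n → ℝ} (hf : ContDiff ℝ (⊤:ℕ∞) f) (v : Euc n) :
    dirD v f = fun x => ∑ i, v i * pder i f x := by
  funext x
  show fderiv ℝ f x v = _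
  conv_lhs => rw [← euc_decomp v]
  rw [map_sum]
  simp [pder]

lemma contDiff_dirD_iterate {f : Euc n → ℝ} (hf : ContDiff ℝ (⊤:ℕ∞) f) (v : Euc n) :
    ∀ k, ContDiff ℝ (⊤:ℕ∞) ((dirD v)^[k] f) := by
  intro k
  induction k with
  | zero => simpa
  | succ k ih => rw [Function.iterate_succ_apply']; exact contDiff_dirD ih v

lemma dirD_iterate_flat {f : Euc n → ℝ} {a : Euc n} (hf : ContDiff ℝ (⊤:ℕ∞) f)
    (hflat : ∀ α : Fin n → ℕ, pderM α f a = 0) (v : Euc n) :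
    ∀ k : ℕ, ∀ l : List (Fin n), pchain l ((dirD v)^[k] f) a = 0 := by
  intro k
  induction k with
  | zero => simpa using pchain_flat hf hflat
  | succ k ih =>
    intro l
    have hsm : ContDiff ℝ (⊤:ℕ∞) ((dirD v)^[k] f) := contDiff_dirD_iterate hf v k
    rw [Function.iterate_succ_apply', dirD_expand hsm v,
      pchain_sum Finset.univ (fun i => v i) _ (fun i => contDiff_pder hsm i) l]
    have hz : ∀ i : Fin n, pchain l (pder i ((dirD v)^[k] f)) a = 0 := by
      intro i
      have : pchain l (pder i ((dirD v)^[k] f)) = pchain (l ++ [i]) ((dirD v)^[k] f) := by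
        rw [pchain_append]; rfl
      rw [this]; exact ih (l ++ [i])
    simp [hz]

lemma iteratedDeriv_line {f : Euc n → ℝ} (hf : ContDiff ℝ (⊤:ℕ∞) f) (a v : Euc n) :
    ∀ (k : ℕ) (t : ℝ), iteratedDeriv k (fun s : ℝ => f (a + s • v)) t
      = (dirD v)^[k] f (a + t • v) := by
  intro k
  induction k with
  | zero => intro t; simp
  | succ k ih =>
    intro t
    rw [iteratedDeriv_succ]
    have hfun : iteratedDeriv k (fun s : ℝ => f (a + s • v))
        = fun s => (dirD v)^[k] f (a + s • v) := funext ih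
    rw [hfun, Function.iterate_succ_apply']
    have hc : HasDerivAt (fun s : ℝ => a + s • v) v t := by
      simpa using ((hasDerivAt_id t).smul_const v).const_add a
    have hH : HasFDerivAt ((dirD v)^[k] f) (fderiv ℝ ((dirD v)^[k] f) (a + t • v)) (a + t • v) :=
      ((contDiff_dirD_iterate hf v k).differentiable (by simp) _).hasFDerivAt
    have hcomp := hH.comp_hasDerivAt t hc
    exact hcomp.deriv

lemma line_flat {f : Euc n → ℝ} {a : Euc n} (hf : ContDiff ℝ (⊤:ℕ∞) f)
    (hflat : ∀ α : Fin n → ℕ, pderM α f a = 0) (v : Euc n) (k : ℕ) :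
    iteratedDeriv k (fun s : ℝ => f (a + s • v)) 0 = 0 := by
  rw [iteratedDeriv_line hf a v k 0]
  have h0 : a + (0:ℝ) • v = a := by simp
  rw [h0]
  simpa using dirD_iterate_flat hf hflat v k []

end AuxB


section Glue

lemma pderM_zero {n : ℕ} (f : Euc n → ℝ) : pderM (fun _ => 0) f = f := by
  unfold pderM
  induction List.finRange n with
  | nil => rfl
  | cons i L ih => rw [List.foldr_cons, ih]; rfl

end Glue

/-- Quasianalyticity of the class `Ā_1^{M}`: a smooth function which is of
class `E^{M}` along all affine lines and is infinitely flat at a point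
vanishes identically. -/
theorem statement12 (M : ℕ → ℝ) (hM : RegularWeightSeq M) (hQA : QAseq M)
    (n : ℕ) (hn : 1 ≤ n) (f : Euc n → ℝ) (hf : ContDiff ℝ (⊤ : ℕ∞) f)
    (hline : ∀ a v : Euc n, v ≠ 0 → Roumieu1 M fun t : ℝ => f (a + t • v))
    (a : Euc n) (hflat : ∀ α : Fin n → ℕ, pderM α f a = 0) :
    ∀ x, f x = 0 := by
  obtain ⟨hMpos, hMconv, hM0, hM1, _⟩ := hM
  intro x
  rcases eq_or_ne x a with rfl | hxa
  · have h := hflat (fun _ => 0)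
    rwa [pderM_zero] at h
  · set v : Euc n := x - a with hv
    have hvne : v ≠ 0 := sub_ne_zero.mpr hxa
    obtain ⟨hgsm, hK⟩ := hline a v hvne
    obtain ⟨ρ, hρ, C, hC⟩ := hK (Set.Icc 0 1) isCompact_Icc
    set Cm : ℝ := max C 1 with hCm
    have hCm0 : 0 < Cm := lt_of_lt_of_le one_pos (le_max_right C 1)
    set N : ℕ → ℝ := fun k => Cm * ρ^k * (k.factorial : ℝ) * M k with hN
    have hNpos : ∀ k, 0 < N k := by
      intro k
      have h1 := hMpos k
      have h2 : (0:ℝ) < (k.factorial : ℝ) := by exact_mod_cast k.factorial_pos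
      positivity
    have hconv : ∀ k, N (k+1) * N (k+1) ≤ N k * N (k+2) := by
      intro k
      have h1 : M (k+1) * M (k+1) ≤ M k * M (k+2) := by
        have h := hMconv (k+1) (by omega)
        rw [show k+1-1 = k from rfl] at h
        nlinarith [h]
      have h2 : ((k+1).factorial : ℝ) * ((k+1).factorial : ℝ)
          ≤ (k.factorial : ℝ) * ((k+2).factorial : ℝ) := by
        have hnat : (k+1).factorial * (k+1).factorial ≤ k.factorial * (k+2).factorial := by
          have e1 : (k+1).factorial * (k+1).factorial
              = (k+1) * (k.factorial * (k+1).factorial) := by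
            rw [Nat.factorial_succ]; ring
          have e2 : k.factorial * (k+2).factorial
              = (k+2) * (k.factorial * (k+1).factorial) := by
            rw [Nat.factorial_succ (k+1)]; ring
          rw [e1, e2]
          exact Nat.mul_le_mul_right _ (by omega)
        exact_mod_cast hnat
      have key : (((k+1).factorial : ℝ) * ((k+1).factorial : ℝ))
            * (M (k+1) * M (k+1))
          ≤ ((k.factorial : ℝ) * ((k+2).factorial : ℝ)) * (M k * M (k+2)) := by
        apply mul_le_mul h2 h1 (by nlinarith [hMpos (k+1)]) (by positivity)
      calc N (k+1) * N (k+1)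
          = (Cm*Cm*(ρ^k*ρ^(k+2))) * ((((k+1).factorial : ℝ) * ((k+1).factorial : ℝ))
            * (M (k+1) * M (k+1))) := by rw [hN]; ring
        _ ≤ (Cm*Cm*(ρ^k*ρ^(k+2))) * (((k.factorial : ℝ) * ((k+2).factorial : ℝ))
            * (M k * M (k+2))) := by
            apply mul_le_mul_of_nonneg_left key (by positivity)
        _ = N k * N (k+2) := by rw [hN]; ring
    have hdivN : ¬ Summable (fun k => N k / N (k+1)) := by
      intro hs
      apply hQA
      have heq : (fun k : ℕ => M k / ((k+1) * M (k+1))) = fun k => ρ * (N k / N (k+1)) := by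
        funext k
        have h1 : (0:ℝ) < M (k+1) := hMpos _
        have h2 : (0:ℝ) < M k := hMpos k
        have h3 : (0:ℝ) < (k.factorial : ℝ) := by exact_mod_cast k.factorial_pos
        have h4 : ((k+1).factorial : ℝ) = ((k:ℝ)+1) * (k.factorial : ℝ) := by
          rw [Nat.factorial_succ]; push_cast; ring
        show M k / (((k:ℝ)+1) * M (k+1))
            = ρ * ((Cm * ρ^k * (k.factorial:ℝ) * M k)
              / (Cm * ρ^(k+1) * (((k+1).factorial:ℝ)) * M (k+1)))
        rw [h4]
        have hk1 : (0:ℝ) < (k:ℝ)+1 := by positivity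
        rw [pow_succ]
        field_simp
      rw [heq]
      exact hs.mul_left ρ
    have hb : ∀ k : ℕ, ∀ t ∈ Set.Icc (0:ℝ) 1, |iteratedDeriv k (fun t : ℝ => f (a + t • v)) t| ≤ N k := by
      intro k t ht
      have h := hC t ht k
      have h2 : C * ρ^k * (k.factorial : ℝ) * M k ≤ N k := by
        show C * ρ^k * (k.factorial : ℝ) * M k ≤ Cm * ρ^k * (k.factorial : ℝ) * M k
        have h3 : (0:ℝ) ≤ ρ^k * (k.factorial : ℝ) * M k := by
          have := (hMpos k).le
          positivity
        calc C * ρ^k * (k.factorial : ℝ) * M k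
            = C * (ρ^k * (k.factorial : ℝ) * M k) := by ring
          _ ≤ Cm * (ρ^k * (k.factorial : ℝ) * M k) :=
              mul_le_mul_of_nonneg_right (le_max_left C 1) h3
          _ = Cm * ρ^k * (k.factorial : ℝ) * M k := by ring
      exact h.trans h2
    have hflatg : ∀ k : ℕ, iteratedDeriv k (fun t : ℝ => f (a + t • v)) 0 = 0 :=
      fun k => line_flat hf hflat v k
    have hz := bang N hNpos hconv hdivN _ hgsm 1 hb hflatg 1 ⟨zero_le_one, le_rfl⟩
    have hx1 : a + (1:ℝ) • v = x := by
      rw [one_smul, hv]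
      abel
    rw [hx1] at hz
    exact hz
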